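/- arXiv:nlin/0105061 — 2 statements merged into one kernel-verified Lean document; each statement's English description precedes it below -/
import Mathlib

section
/- Let m ≥ 2 and c_1,...,c_m be elements of a commutative ring. Define the m×m matrix Ω_m whose (i,j) entry is the (j-1)-th elementary symmetric polynomial of the variables {c_1,...,c_m} \ {c_i} (i.e., e_{j-1}(c_1,...,ĉ_i,...,c_m), where ĉ_i means c_i is omitted). Then det(Ω_m) = ∏_{1 ≤ i < j ≤ m} (c_i - c_j). -/
/-- Elementary symmetric polynomial `e_k` of `f` over the finite set `s`. -/
noncomputable def esymm {ι R : Type*} [CommRing R] (s : Finset ι) (f : ι → R) (k : ℕ) : R :=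
  ∑ t ∈ s.powersetCard k, ∏ i ∈ t, f i

open Finset Matrix

lemma esymm_eq_multiset {ι R : Type*} [CommRing R] (s : Finset ι) (f : ι → R) (k : ℕ) :
    esymm s f k = (s.val.map f).esymm k :=
  (Finset.esymm_map_val f s k).symm

lemma prod_sub_eval {ι R : Type*} [CommRing R] (s : Finset ι) (f : ι → R) (x : R) :
    ∏ l ∈ s, (x - f l)
      = ∑ j ∈ Finset.range (s.card + 1), (-1 : R) ^ j * esymm s f j * x ^ (s.card - j) := by
  have h := congrArg (Polynomial.eval x) (Multiset.prod_X_sub_X_eq_sum_esymm (s.val.map f))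
  simp only [Polynomial.eval_multiset_prod, Multiset.map_map, Function.comp,
    Polynomial.eval_sub, Polynomial.eval_X, Polynomial.eval_C, Multiset.card_map,
    Polynomial.eval_finset_sum, Polynomial.eval_mul, Polynomial.eval_pow,
    Polynomial.eval_neg, Polynomial.eval_one] at h
  calc ∏ l ∈ s, (x - f l) = (Multiset.map (fun l => x - f l) s.val).prod := rfl
    _ = _ := by
        rw [h]
        refine Finset.sum_congr rfl fun j hj => ?_
        rw [esymm_eq_multiset, mul_assoc]; rfl

/-- pairs reindexing : products over `i < j` pairs. -/
lemma prod_pairs {R : Type*} [CommRing R] {m : ℕ} (g : Fin m → Fin m → R) :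
    ∏ p ∈ Finset.univ.filter (fun p : Fin m × Fin m => p.1 < p.2), g p.1 p.2
      = ∏ i : Fin m, ∏ j ∈ Finset.Ioi i, g i j :=
  Finset.prod_finset_product' _ _ _ (by simp)

lemma prod_Ioi_swap {R : Type*} [CommRing R] {m : ℕ} (g : Fin m → Fin m → R) :
    ∏ i : Fin m, ∏ j ∈ Finset.Ioi i, g i j
      = ∏ i : Fin m, ∏ j ∈ Finset.Ioi i, g (Fin.rev j) (Fin.rev i) := by
  rw [← prod_pairs, ← prod_pairs]
  refine Finset.prod_nbij' (fun p => (p.2.rev, p.1.rev)) (fun p => (p.2.rev, p.1.rev))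
    ?_ ?_ ?_ ?_ ?_
  · intro p hp; simp only [Finset.mem_filter, Finset.mem_univ, true_and] at hp ⊢
    exact Fin.rev_lt_rev.mpr hp
  · intro p hp; simp only [Finset.mem_filter, Finset.mem_univ, true_and] at hp ⊢
    exact Fin.rev_lt_rev.mpr hp
  · intro p _; simp
  · intro p _; simp
  · intro p _; simp

lemma sign_rev_mul_vandermonde {R : Type*} [CommRing R] {m : ℕ} (v : Fin m → R) :
    ((Equiv.Perm.sign (Fin.revPerm : Equiv.Perm (Fin m)) : ℤ) : R)
        * (Matrix.vandermonde v).det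
      = ∏ i : Fin m, ∏ j ∈ Finset.Ioi i, (v i - v j) := by
  have h2 : (Matrix.vandermonde v).submatrix (Fin.revPerm : Equiv.Perm (Fin m)) id
      = Matrix.vandermonde (fun i => v (Fin.rev i)) := by
    ext i j; rfl
  have h1 := Matrix.det_permute (Fin.revPerm : Equiv.Perm (Fin m)) (Matrix.vandermonde v)
  rw [h2, Matrix.det_vandermonde] at h1
  have h3 : ∏ i : Fin m, ∏ j ∈ Finset.Ioi i, (v (Fin.rev j) - v (Fin.rev i))
      = ∏ i : Fin m, ∏ j ∈ Finset.Ioi i, (v i - v j) := by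
    rw [prod_Ioi_swap (fun i j => v i - v j)]
  rw [h3] at h1
  rw [← h1]

lemma neg_prod_Ioi {R : Type*} [CommRing R] {m : ℕ} (v : Fin m → R) :
    ∏ i : Fin m, ∏ j ∈ Finset.Ioi i, (v i - v j)
      = (∏ j : Fin m, (-1 : R) ^ (j : ℕ))
          * ∏ i : Fin m, ∏ j ∈ Finset.Ioi i, (v j - v i) := by
  have h1 : ∀ i : Fin m, ∏ j ∈ Finset.Ioi i, (v i - v j)
      = (-1 : R) ^ ((Fin.rev i : Fin m) : ℕ) * ∏ j ∈ Finset.Ioi i, (v j - v i) := by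
    intro i
    calc ∏ j ∈ Finset.Ioi i, (v i - v j)
        = ∏ j ∈ Finset.Ioi i, ((-1) * (v j - v i)) := Finset.prod_congr rfl fun j _ => by ring
      _ = (∏ _j ∈ Finset.Ioi i, (-1 : R)) * ∏ j ∈ Finset.Ioi i, (v j - v i) :=
          Finset.prod_mul_distrib
      _ = _ := by
          rw [Finset.prod_const, Fin.card_Ioi, Fin.val_rev]
          congr 2
          omega
  calc ∏ i : Fin m, ∏ j ∈ Finset.Ioi i, (v i - v j)
      = ∏ i : Fin m, ((-1 : R) ^ ((Fin.rev i : Fin m) : ℕ) * ∏ j ∈ Finset.Ioi i, (v j - v i)) :=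
        Finset.prod_congr rfl fun i _ => h1 i
    _ = (∏ i : Fin m, (-1 : R) ^ ((Fin.rev i : Fin m) : ℕ))
          * ∏ i : Fin m, ∏ j ∈ Finset.Ioi i, (v j - v i) := Finset.prod_mul_distrib
    _ = _ := by
        congr 1
        exact Equiv.prod_comp Fin.revPerm (fun i : Fin m => (-1 : R) ^ (i : ℕ))

lemma omega_mul {R : Type*} [CommRing R] {m : ℕ} (hm : 1 ≤ m) (c : Fin m → R) :
    (Matrix.of fun i j : Fin m => esymm (Finset.univ.erase i) c (j : ℕ)) *
      (Matrix.of fun j k : Fin m => (-1 : R) ^ (j : ℕ) * c k ^ (m - 1 - (j : ℕ)))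
    = Matrix.diagonal (fun i => ∏ l ∈ Finset.univ.erase i, (c i - c l)) := by
  ext i k
  rw [Matrix.mul_apply]
  have hcard : (Finset.univ.erase i).card = m - 1 := by
    rw [Finset.card_erase_of_mem (Finset.mem_univ i), Finset.card_univ, Fintype.card_fin]
  have key : ∑ j : Fin m, (Matrix.of fun i j : Fin m => esymm (Finset.univ.erase i) c (j : ℕ)) i j
        * (Matrix.of fun j k : Fin m => (-1 : R) ^ (j : ℕ) * c k ^ (m - 1 - (j : ℕ))) j k
      = ∏ l ∈ Finset.univ.erase i, (c k - c l) := by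
    rw [prod_sub_eval, hcard, Nat.sub_add_cancel hm,
      ← Fin.sum_univ_eq_sum_range
        (fun t => (-1 : R) ^ t * esymm (Finset.univ.erase i) c t * c k ^ (m - 1 - t)) m]
    exact Finset.sum_congr rfl fun j _ => by simp only [Matrix.of_apply]; ring
  rw [key]
  rcases eq_or_ne k i with rfl | hk
  · rw [Matrix.diagonal_apply_eq]
  · rw [Matrix.diagonal_apply_ne' _ hk]
    exact Finset.prod_eq_zero (Finset.mem_erase.mpr ⟨hk, Finset.mem_univ k⟩) (sub_self _)

lemma prod_Iio_eq {R : Type*} [CommRing R] {m : ℕ} (g : Fin m → Fin m → R) :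
    ∏ i : Fin m, ∏ j ∈ Finset.Iio i, g i j = ∏ i : Fin m, ∏ j ∈ Finset.Ioi i, g j i := by
  have e1 := Finset.prod_finset_product'
    (Finset.univ.filter (fun p : Fin m × Fin m => p.2 < p.1)) Finset.univ Finset.Iio
    (by simp) (f := g)
  have e2 := Finset.prod_finset_product_right'
    (Finset.univ.filter (fun p : Fin m × Fin m => p.2 < p.1)) Finset.univ Finset.Ioi
    (by simp) (f := g)
  exact e1.symm.trans e2

lemma erase_eq_union {m : ℕ} (i : Fin m) :
    Finset.univ.erase i = Finset.Iio i ∪ Finset.Ioi i := by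
  ext l
  simp only [Finset.mem_erase, Finset.mem_univ, and_true, Finset.mem_union, Finset.mem_Iio,
    Finset.mem_Ioi]
  exact ⟨fun h => h.lt_or_gt, fun h => h.elim (fun h => h.ne) (fun h => h.ne')⟩

lemma stmtA (m : ℕ) (hm : 2 ≤ m) :
    Matrix.det (Matrix.of fun i j : Fin m =>
        esymm (Finset.univ.erase i) (MvPolynomial.X (R := ℤ)) (j : ℕ))
      = ∏ i : Fin m, ∏ j ∈ Finset.Ioi i,
          (MvPolynomial.X (R := ℤ) i - MvPolynomial.X j) := by
  set A := MvPolynomial (Fin m) ℤ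
  set c : Fin m → A := MvPolynomial.X with hc
  set P : A := ∏ j : Fin m, (-1 : A) ^ (j : ℕ) with hPdef
  set V : A := (Matrix.vandermonde c).det with hV
  set T : A := ∏ i : Fin m, ∏ j ∈ Finset.Ioi i, (c i - c j) with hT
  set V' : A := ∏ i : Fin m, ∏ j ∈ Finset.Ioi i, (c j - c i) with hV'
  have hm1 : 1 ≤ m := le_trans one_le_two hm
  have hVV' : V = V' := Matrix.det_vandermonde c
  have hTPV : T = P * V := by rw [hVV']; exact neg_prod_Ioi c
  have hsV : ((Equiv.Perm.sign (Fin.revPerm : Equiv.Perm (Fin m)) : ℤ) : A) * V = T :=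
    sign_rev_mul_vandermonde c
  have hdet := congrArg Matrix.det (omega_mul hm1 c)
  rw [Matrix.det_mul, Matrix.det_diagonal] at hdet
  have hB : (Matrix.of fun j k : Fin m => (-1 : A) ^ (j : ℕ) * c k ^ (m - 1 - (j : ℕ))).det
      = P * (((Equiv.Perm.sign (Fin.revPerm : Equiv.Perm (Fin m)) : ℤ) : A) * V) := by
    have hBe : (Matrix.of fun j k : Fin m => (-1 : A) ^ (j : ℕ) * c k ^ (m - 1 - (j : ℕ)))
        = Matrix.of fun j k : Fin m => (-1 : A) ^ (j : ℕ)
            * (((Matrix.vandermonde c)ᵀ).submatrix (Fin.revPerm : Equiv.Perm (Fin m)) id) j k := by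
      ext j k
      simp only [Matrix.of_apply, Matrix.submatrix_apply, Matrix.transpose_apply,
        Matrix.vandermonde_apply, id_eq]
      have : m - 1 - (j : ℕ) = ((Fin.revPerm j : Fin m) : ℕ) := by
        simp only [Fin.revPerm_apply, Fin.val_rev]
        omega
      rw [this]
    rw [hBe, Matrix.det_mul_column, Matrix.det_permute, Matrix.det_transpose, ← hV, ← hPdef]
  rw [hB, hsV] at hdet
  have hD : ∏ i : Fin m, ∏ l ∈ Finset.univ.erase i, (c i - c l) = T * V := by
    have h1 : ∀ i : Fin m, ∏ l ∈ Finset.univ.erase i, (c i - c l)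
        = (∏ l ∈ Finset.Iio i, (c i - c l)) * ∏ l ∈ Finset.Ioi i, (c i - c l) := by
      intro i
      rw [erase_eq_union, Finset.prod_union (by
        simp only [Finset.disjoint_left, Finset.mem_Iio, Finset.mem_Ioi]
        intro a h1 h2
        exact absurd (h1.trans h2) (lt_irrefl _))]
    calc ∏ i : Fin m, ∏ l ∈ Finset.univ.erase i, (c i - c l)
        = ∏ i : Fin m, ((∏ l ∈ Finset.Iio i, (c i - c l)) * ∏ l ∈ Finset.Ioi i, (c i - c l)) :=
          Finset.prod_congr rfl fun i _ => h1 i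
      _ = (∏ i : Fin m, ∏ l ∈ Finset.Iio i, (c i - c l))
            * ∏ i : Fin m, ∏ l ∈ Finset.Ioi i, (c i - c l) := Finset.prod_mul_distrib
      _ = V' * T := by rw [prod_Iio_eq (fun i l => c i - c l), ← hV', ← hT]
      _ = T * V := by rw [hVV']; ring
  rw [hD] at hdet
  have hT0 : T ≠ 0 := by
    rw [hT]
    refine Finset.prod_ne_zero_iff.mpr fun i _ => Finset.prod_ne_zero_iff.mpr fun j hj => ?_
    refine sub_ne_zero_of_ne fun h => ?_
    have := MvPolynomial.X_injective h
    exact absurd this (Finset.mem_Ioi.mp hj).ne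
  have hPP : P * P = 1 := by
    rw [hPdef, ← Finset.prod_mul_distrib]
    refine Finset.prod_eq_one fun j _ => by rw [← mul_pow]; norm_num
  have hcancel : Matrix.det (Matrix.of fun i j : Fin m =>
      esymm (Finset.univ.erase i) c (j : ℕ)) * P = V := by
    have h' : (Matrix.det (Matrix.of fun i j : Fin m =>
        esymm (Finset.univ.erase i) c (j : ℕ)) * P) * T = V * T := by
      calc _ = Matrix.det (Matrix.of fun i j : Fin m =>
            esymm (Finset.univ.erase i) c (j : ℕ)) * (P * T) := by ring
        _ = T * V := hdet
        _ = V * T := mul_comm _ _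
    exact mul_right_cancel₀ hT0 h'
  calc Matrix.det (Matrix.of fun i j : Fin m => esymm (Finset.univ.erase i) c (j : ℕ))
      = Matrix.det (Matrix.of fun i j : Fin m =>
          esymm (Finset.univ.erase i) c (j : ℕ)) * (P * P) := by rw [hPP, mul_one]
    _ = (Matrix.det (Matrix.of fun i j : Fin m =>
          esymm (Finset.univ.erase i) c (j : ℕ)) * P) * P := by ring
    _ = V * P := by rw [hcancel]
    _ = P * V := mul_comm _ _
    _ = T := hTPV.symm

theorem stmt3 {R : Type*} [CommRing R] (m : ℕ) (hm : 2 ≤ m) (c : Fin m → R) :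
    Matrix.det (Matrix.of fun i j : Fin m => esymm (Finset.univ.erase i) c (j : ℕ))
      = ∏ p ∈ Finset.univ.filter (fun p : Fin m × Fin m => p.1 < p.2), (c p.1 - c p.2) := by
  classical
  let φ : MvPolynomial (Fin m) ℤ →+* R := MvPolynomial.eval₂Hom (Int.castRingHom R) c
  have hX : ∀ i, φ (MvPolynomial.X i) = c i := fun i => MvPolynomial.eval₂Hom_X' _ _ _
  have h1 : Matrix.det (Matrix.of fun i j : Fin m => esymm (Finset.univ.erase i) c (j : ℕ))
      = φ (Matrix.det (Matrix.of fun i j : Fin m =>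
          esymm (Finset.univ.erase i) (MvPolynomial.X (R := ℤ)) (j : ℕ))) := by
    rw [RingHom.map_det]
    congr 1
    ext i j
    simp [RingHom.mapMatrix_apply, esymm, map_sum, map_prod, hX]
  rw [h1, stmtA m hm, map_prod, prod_pairs (fun i j => c i - c j)]
  refine Finset.prod_congr rfl fun i _ => ?_
  rw [map_prod]
  exact Finset.prod_congr rfl fun j _ => by rw [map_sub, hX, hX]
end

section
/- Let L(λ) = C + D(λ) be the m×m matrix with C = diag(c_1,...,c_m) and D_{ij}(λ) = Σ_{s=1}^N μ_s φ_{is} ψ_{js}/(λ − λ_s), where the λ_s are distinct and the μ_s are nonzero. With the Poisson bracket {f,g} = Σ_{i=1}^m Σ_{s=1}^N μ_s^{-1} (∂f/∂ψ_{is} ∂g/∂φ_{is} − ∂f/∂φ_{is} ∂g/∂ψ_{is}) on functions of the 2mN variables φ_{is}, ψ_{is}, the entrywise brackets satisfy: {L_{ij}(λ), L_{kl}(μ)} = 0 when i ≠ l and j ≠ k; = (1/(μ−λ))(L_{kj}(μ) − L_{kj}(λ)) when i = l and j ≠ k; = (1/(μ−λ))(L_{il}(λ) − L_{il}(μ)) when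 i ≠ l and j = k; and = (1/(μ−λ))[(L_{ii}(λ) − L_{ii}(μ)) − (L_{jj}(λ) − L_{jj}(μ))] when i = l and j = k, for λ ≠ μ both distinct from all λ_s. -/
/-- Phase space `ℝ^{2mN}` with coordinates `φ_{is}`, `ψ_{is}`. -/
abbrev PS (m N : ℕ) := ((Fin m × Fin N) → ℝ) × ((Fin m × Fin N) → ℝ)

/-- Partial derivative with respect to `φ_{is}`. -/
noncomputable def pderivPhi {m N : ℕ} (f : PS m N → ℝ) (i : Fin m) (s : Fin N)
    (x : PS m N) : ℝ :=
  deriv (fun t => f (Function.update x.1 (i, s) t, x.2)) (x.1 (i, s))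

/-- Partial derivative with respect to `ψ_{is}`. -/
noncomputable def pderivPsi {m N : ℕ} (f : PS m N → ℝ) (i : Fin m) (s : Fin N)
    (x : PS m N) : ℝ :=
  deriv (fun t => f (x.1, Function.update x.2 (i, s) t)) (x.2 (i, s))

/-- The weighted canonical Poisson bracket
`{f,g} = Σ_{i,s} μ_s⁻¹ (∂f/∂ψ_{is} ∂g/∂φ_{is} − ∂f/∂φ_{is} ∂g/∂ψ_{is})`. -/
noncomputable def pbr {m N : ℕ} (mus : Fin N → ℝ) (f g : PS m N → ℝ) (x : PS m N) : ℝ :=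
  ∑ i : Fin m, ∑ s : Fin N, (mus s)⁻¹ *
    (pderivPsi f i s x * pderivPhi g i s x - pderivPhi f i s x * pderivPsi g i s x)

/-- The entry `L_{ij}(λ) = δ_{ij} c_i + Σ_s μ_s φ_{is} ψ_{js} / (λ − λ_s)`
of the Lax matrix, as a function on phase space. -/
noncomputable def Lent {m N : ℕ} (c : Fin m → ℝ) (ls mus : Fin N → ℝ) (la : ℝ)
    (i j : Fin m) (x : PS m N) : ℝ :=
  (if i = j then c i else 0) + ∑ s, mus s * x.1 (i, s) * x.2 (j, s) / (la - ls s)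

lemma dphi_Lent {m N : ℕ} (c : Fin m → ℝ) (ls mus : Fin N → ℝ) (la : ℝ)
    (i j a : Fin m) (s : Fin N) (x : PS m N) :
    pderivPhi (Lent c ls mus la i j) a s x
      = if a = i then mus s * x.2 (j, s) / (la - ls s) else 0 := by
  unfold pderivPhi Lent
  have h : HasDerivAt
      (fun t => (if i = j then c i else 0) +
        ∑ u, mus u * (Function.update x.1 (a, s) t (i, u)) * x.2 (j, u) / (la - ls u))
      (∑ u, if (i, u) = (a, s) then mus u * x.2 (j, u) / (la - ls u) else 0)
      (x.1 (a, s)) := by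
    apply HasDerivAt.const_add
    apply HasDerivAt.fun_sum
    intro u _
    by_cases h : (i, u) = (a, s)
    · simp only [Function.update_apply, h, if_pos rfl]
      simpa using (((hasDerivAt_id (x.1 (a,s))).const_mul (mus u)).mul_const
        (x.2 (j, u))).div_const (la - ls u)
    · simp only [Function.update_apply, if_neg h]
      exact hasDerivAt_const _ _
  rw [HasDerivAt.deriv h]
  simp only [Prod.mk.injEq]
  by_cases hai : a = i
  · subst hai
    simp [Finset.sum_ite_eq']
  · rw [if_neg hai]
    apply Finset.sum_eq_zero
    intro u _
    rw [if_neg]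
    rintro ⟨rfl, rfl⟩
    exact hai rfl

lemma dpsi_Lent {m N : ℕ} (c : Fin m → ℝ) (ls mus : Fin N → ℝ) (la : ℝ)
    (i j a : Fin m) (s : Fin N) (x : PS m N) :
    pderivPsi (Lent c ls mus la i j) a s x
      = if a = j then mus s * x.1 (i, s) / (la - ls s) else 0 := by
  unfold pderivPsi Lent
  have h : HasDerivAt
      (fun t => (if i = j then c i else 0) +
        ∑ u, mus u * x.1 (i, u) * (Function.update x.2 (a, s) t (j, u)) / (la - ls u))
      (∑ u, if (j, u) = (a, s) then mus u * x.1 (i, u) / (la - ls u) else 0)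
      (x.2 (a, s)) := by
    apply HasDerivAt.const_add
    apply HasDerivAt.fun_sum
    intro u _
    by_cases h : (j, u) = (a, s)
    · simp only [Function.update_apply, h, if_pos rfl]
      simpa [mul_comm] using (((hasDerivAt_id (x.2 (a,s))).const_mul
        (mus u * x.1 (i, u)))).div_const (la - ls u)
    · simp only [Function.update_apply, if_neg h]
      exact hasDerivAt_const _ _
  rw [HasDerivAt.deriv h]
  simp only [Prod.mk.injEq]
  by_cases haj : a = j
  · subst haj
    simp [Finset.sum_ite_eq']
  · rw [if_neg haj]
    apply Finset.sum_eq_zero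
    intro u _
    rw [if_neg]
    rintro ⟨rfl, rfl⟩
    exact haj rfl

lemma sum_if_mul {m : ℕ} (j k : Fin m) (A B : Fin m → ℝ) :
    ∑ a, (if a = j then A a else 0) * (if a = k then B a else 0)
      = if j = k then A j * B j else 0 := by
  by_cases h : j = k
  · subst h
    simp [← ite_and, Finset.sum_ite_eq']
  · rw [if_neg h]
    apply Finset.sum_eq_zero
    intro a _
    by_cases haj : a = j
    · subst haj; simp [h]
    · simp [haj]

lemma Lent_sub {m N : ℕ} (c : Fin m → ℝ) (ls mus : Fin N → ℝ) (al be : ℝ)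
    (p q : Fin m) (x : PS m N) :
    Lent c ls mus al p q x - Lent c ls mus be p q x
      = ∑ s, (mus s * x.1 (p, s) * x.2 (q, s) / (al - ls s)
          - mus s * x.1 (p, s) * x.2 (q, s) / (be - ls s)) := by
  unfold Lent
  rw [Finset.sum_sub_distrib]
  ring

theorem stmt10 (m N : ℕ) (c : Fin m → ℝ) (ls mus : Fin N → ℝ)
    (hls : Function.Injective ls) (hmus : ∀ s, mus s ≠ 0)
    (la mu : ℝ) (hlm : la ≠ mu) (hla : ∀ s, la ≠ ls s) (hmu : ∀ s, mu ≠ ls s)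
    (i j k l : Fin m) (x : PS m N) :
    (i ≠ l → j ≠ k →
      pbr mus (Lent c ls mus la i j) (Lent c ls mus mu k l) x = 0) ∧
    (i = l → j ≠ k →
      pbr mus (Lent c ls mus la i j) (Lent c ls mus mu k l) x
        = (1 / (mu - la)) * (Lent c ls mus mu k j x - Lent c ls mus la k j x)) ∧
    (i ≠ l → j = k →
      pbr mus (Lent c ls mus la i j) (Lent c ls mus mu k l) x
        = (1 / (mu - la)) * (Lent c ls mus la i l x - Lent c ls mus mu i l x)) ∧
    (i = l → j = k →
      pbr mus (Lent c ls mus la i j) (Lent c ls mus mu k l) x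
        = (1 / (mu - la)) *
          ((Lent c ls mus la i i x - Lent c ls mus mu i i x)
            - (Lent c ls mus la j j x - Lent c ls mus mu j j x))) := by
  have hml : mu - la ≠ 0 := sub_ne_zero_of_ne (Ne.symm hlm)
  have hlas : ∀ s, la - ls s ≠ 0 := fun s => sub_ne_zero_of_ne (hla s)
  have hmus' : ∀ s, mu - ls s ≠ 0 := fun s => sub_ne_zero_of_ne (hmu s)
  have key : pbr mus (Lent c ls mus la i j) (Lent c ls mus mu k l) x
      = ∑ s, mus s * ((if j = k then x.1 (i, s) * x.2 (l, s) else 0)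
          - (if i = l then x.1 (k, s) * x.2 (j, s) else 0))
          / ((la - ls s) * (mu - ls s)) := by
    unfold pbr
    simp only [dphi_Lent, dpsi_Lent]
    rw [Finset.sum_comm]
    refine Finset.sum_congr rfl fun s _ => ?_
    rw [← Finset.mul_sum, Finset.sum_sub_distrib,
      sum_if_mul j k (fun _ => mus s * x.1 (i, s) / (la - ls s))
        (fun _ => mus s * x.2 (l, s) / (mu - ls s)),
      sum_if_mul i l (fun _ => mus s * x.2 (j, s) / (la - ls s))
        (fun _ => mus s * x.1 (k, s) / (mu - ls s))]
    by_cases hjk : j = k <;> by_cases hil : i = l <;>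
        simp only [hjk, hil, if_true, if_false, eq_self_iff_true, ite_true, ite_false] <;>
        field_simp [hmus s, hlas s, hmus' s] <;>
      ring
  refine ⟨fun hil hjk => ?_, fun hil hjk => ?_, fun hil hjk => ?_, fun hil hjk => ?_⟩
  · rw [key]
    simp [if_neg hjk, if_neg hil]
  · subst hil
    rw [key, show Lent c ls mus mu k j x - Lent c ls mus la k j x
        = -(Lent c ls mus la k j x - Lent c ls mus mu k j x) by ring,
      Lent_sub, mul_neg, Finset.mul_sum, ← Finset.sum_neg_distrib]
    refine Finset.sum_congr rfl fun s _ => ?_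
    rw [if_neg hjk, if_pos rfl]
    field_simp [hlas s, hmus' s]
    ring
  · subst hjk
    rw [key, Lent_sub, Finset.mul_sum]
    refine Finset.sum_congr rfl fun s _ => ?_
    rw [if_pos rfl, if_neg hil]
    field_simp [hlas s, hmus' s]
    ring
  · subst hil; subst hjk
    rw [key, Lent_sub, Lent_sub, ← Finset.sum_sub_distrib, Finset.mul_sum]
    refine Finset.sum_congr rfl fun s _ => ?_
    rw [if_pos rfl, if_pos rfl]
    field_simp [hlas s, hmus' s]
    ring
end
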